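/- Let t ∈ ℝ. Let r : ℝ → [0,∞) be measurable, integrable, vanishing on (−∞,0], with ρ := ∫_ℝ r(x) dx < 1. Let p, q : ℝ → [0,∞) be measurable, with q vanishing on (−∞,t], q bounded on every bounded interval, and suppose q(s) ≤ p(s) + (r∗q)(s) for every s ∈ ℝ. Then for every s ∈ ℝ, q(s) ≤ Σ_{i=0}^∞ (r^{∗i} ∗ p)(s), where r^{∗0}∗p := p, r^{∗i} denotes the i-fold convolution of r with itself, and (f∗g)(s) := ∫_ℝ f(s−u) g(u) du. -/

import Mathlib

open MeasureTheory Real Filter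
open scoped ENNReal

/-- Convolution of `[0,∞]`-valued functions on `ℝ` (Lebesgue measure), defined
pointwise: `(f ∗ g)(s) = ∫ f(s−u) g(u) du`. -/
noncomputable def econv (f g : ℝ → ℝ≥0∞) : ℝ → ℝ≥0∞ :=
  fun s => ∫⁻ u, f (s - u) * g u

/-- `convIter r p i = r^{∗i} ∗ p`, with `convIter r p 0 = p`. -/
noncomputable def convIter (r p : ℝ → ℝ≥0∞) : ℕ → ℝ → ℝ≥0∞
  | 0 => p
  | n + 1 => econv r (convIter r p n)

/-- The renewal-type iteration lemma used in the proof of Theorem 4.1: if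
`q ≤ p + r∗q` pointwise, `r` is nonnegative, integrable, supported on `(0,∞)` with
`∫ r < 1`, and `q` is nonnegative, vanishes on `(−∞,t]` and is bounded on bounded
intervals, then `q(s) ≤ Σ_{i=0}^∞ (r^{∗i} ∗ p)(s)` for all `s` (with `r^{∗0}∗p = p`). -/
theorem renewal_iteration (t : ℝ) (r p q : ℝ → ℝ)
    (hrm : Measurable r) (hr0 : ∀ x, 0 ≤ r x) (hrneg : ∀ x ≤ (0 : ℝ), r x = 0)
    (hrint : Integrable r volume) (hρ : ∫ x, r x < 1)
    (hpm : Measurable p) (hp0 : ∀ x, 0 ≤ p x)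
    (hqm : Measurable q) (hq0 : ∀ x, 0 ≤ q x) (hqt : ∀ x ≤ t, q x = 0)
    (hqb : ∀ a b : ℝ, ∃ C : ℝ, ∀ x ∈ Set.Icc a b, q x ≤ C)
    (hrec : ∀ s : ℝ, ENNReal.ofReal (q s) ≤ ENNReal.ofReal (p s)
      + econv (fun x => ENNReal.ofReal (r x)) (fun x => ENNReal.ofReal (q x)) s) :
    ∀ s : ℝ, ENNReal.ofReal (q s) ≤
      ∑' i : ℕ, convIter (fun x => ENNReal.ofReal (r x))
        (fun x => ENNReal.ofReal (p x)) i s := by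
  set R : ℝ → ℝ≥0∞ := fun x => ENNReal.ofReal (r x) with hR
  set P : ℝ → ℝ≥0∞ := fun x => ENNReal.ofReal (p x) with hP
  set Q : ℝ → ℝ≥0∞ := fun x => ENNReal.ofReal (q x) with hQ
  have hRm : Measurable R := hrm.ennreal_ofReal
  have hPm : Measurable P := hpm.ennreal_ofReal
  have hQm : Measurable Q := hqm.ennreal_ofReal
  -- measurability of econv
  have hconv_meas : ∀ f : ℝ → ℝ≥0∞, Measurable f → Measurable (econv R f) := by
    intro f hf
    exact Measurable.lintegral_prod_right
      ((hRm.comp (measurable_fst.sub measurable_snd)).mul (hf.comp measurable_snd))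
  have hIterP : ∀ n, Measurable (convIter R P n) := by
    intro n; induction n with
    | zero => exact hPm
    | succ n ih => exact hconv_meas _ ih
  have hIterQ : ∀ n, Measurable (convIter R Q n) := by
    intro n; induction n with
    | zero => exact hQm
    | succ n ih => exact hconv_meas _ ih
  -- total mass of R
  set ρ : ℝ≥0∞ := ∫⁻ x, R x with hρdef
  have hρ_eq : ρ = ENNReal.ofReal (∫ x, r x) :=
    (ofReal_integral_eq_lintegral_ofReal hrint (Filter.Eventually.of_forall hr0)).symm
  have hρ1 : ρ < 1 := by
    rw [hρ_eq]
    exact lt_of_lt_of_le (ENNReal.ofReal_lt_ofReal_iff one_pos |>.2 hρ) (by simp)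
  have hshift : ∀ u : ℝ, (∫⁻ v, R (u - v)) = ρ := by
    intro u
    exact (Measure.measurePreserving_sub_left volume u).lintegral_comp hRm
  -- R vanishes on nonpositive arguments
  have hRneg : ∀ x ≤ (0 : ℝ), R x = 0 := by
    intro x hx; simp [hR, hrneg x hx]
  -- econv distributes over addition in second argument
  have hconv_add : ∀ (f g : ℝ → ℝ≥0∞), Measurable f → ∀ s,
      econv R (fun u => f u + g u) s = econv R f s + econv R g s := by
    intro f g hf s
    simp only [econv, mul_add]
    exact lintegral_add_left ((hRm.comp (measurable_const.sub measurable_id)).mul hf) _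
  -- main induction: Q ≤ partial sums + remainder
  have key : ∀ n s, Q s ≤ (∑ i ∈ Finset.range n, convIter R P i s) + convIter R Q n s := by
    intro n
    induction n with
    | zero => intro s; simp [convIter]
    | succ n ih =>
      intro s
      have step1 : econv R Q s ≤
          econv R (fun u => (∑ i ∈ Finset.range n, convIter R P i u) + convIter R Q n u) s := by
        refine lintegral_mono fun u => ?_
        exact mul_le_mul_right (ih u) _
      have step2 : econv R (fun u => (∑ i ∈ Finset.range n, convIter R P i u)
            + convIter R Q n u) s
          = (∑ i ∈ Finset.range n, convIter R P (i + 1) s) + convIter R Q (n + 1) s := by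
        rw [hconv_add _ _ (Finset.measurable_sum _ fun i _ => hIterP i) s]
        congr 1
        simp only [econv]
        rw [show (fun u => R (s - u) * ∑ i ∈ Finset.range n, convIter R P i u)
            = fun u => ∑ i ∈ Finset.range n, R (s - u) * convIter R P i u by
          funext u; rw [Finset.mul_sum]]
        exact lintegral_finset_sum _ (fun i _ =>
            (hRm.comp (measurable_const.sub measurable_id)).mul (hIterP i))
      calc Q s ≤ P s + econv R Q s := hrec s
        _ ≤ P s + ((∑ i ∈ Finset.range n, convIter R P (i + 1) s) + convIter R Q (n + 1) s) := by
            rw [← step2]; exact add_le_add_right step1 _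
        _ = ((∑ i ∈ Finset.range n, convIter R P (i + 1) s) + convIter R P 0 s)
              + convIter R Q (n + 1) s := by
            show P s + _ = _
            rw [show convIter R P 0 = P from rfl]; ring
        _ = (∑ i ∈ Finset.range (n + 1), convIter R P i s) + convIter R Q (n + 1) s := by
            rw [Finset.sum_range_succ']
  intro s
  -- bound on q on (-∞, s]
  obtain ⟨C, hC⟩ := hqb t s
  set C' : ℝ≥0∞ := ENNReal.ofReal (max C 0) with hC'
  have hQle : ∀ u ≤ s, Q u ≤ C' := by
    intro u hu
    rcases le_or_gt u t with h | h
    · simp [hQ, hqt u h, C']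
    · have : q u ≤ C := hC u ⟨h.le, hu⟩
      exact ENNReal.ofReal_le_ofReal (this.trans (le_max_left _ _))
  -- tail estimate
  have tail : ∀ n, ∀ u ≤ s, convIter R Q n u ≤ C' * ρ ^ n := by
    intro n
    induction n with
    | zero => intro u hu; simpa [convIter] using hQle u hu
    | succ n ih =>
      intro u hu
      have hbound : ∀ v : ℝ, R (u - v) * convIter R Q n v ≤ R (u - v) * (C' * ρ ^ n) := by
        intro v
        rcases le_or_gt u v with h | h
        · rw [hRneg (u - v) (by linarith)]; simp
        · exact mul_le_mul_right (ih v (h.le.trans hu)) _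
      calc convIter R Q (n + 1) u = ∫⁻ v, R (u - v) * convIter R Q n v := rfl
        _ ≤ ∫⁻ v, R (u - v) * (C' * ρ ^ n) := lintegral_mono hbound
        _ = (∫⁻ v, R (u - v)) * (C' * ρ ^ n) :=
            lintegral_mul_const _ (hRm.comp (measurable_const.sub measurable_id))
        _ = C' * ρ ^ (n + 1) := by rw [hshift u]; ring
  -- pass to the limit
  have hC'top : C' ≠ ⊤ := ENNReal.ofReal_ne_top
  have htend : Tendsto (fun n : ℕ => (∑' i, convIter R P i s) + C' * ρ ^ n) atTop
      (nhds ((∑' i, convIter R P i s) + 0)) := by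
    refine Tendsto.const_add _ ?_
    have := ENNReal.tendsto_pow_atTop_nhds_zero_of_lt_one hρ1
    simpa using ENNReal.Tendsto.const_mul this (Or.inr hC'top)
  rw [add_zero] at htend
  refine ge_of_tendsto' htend fun n => ?_
  exact (key n s).trans (add_le_add (ENNReal.sum_le_tsum _) (tail n s le_rfl))
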